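/- Let (λ_n) and (μ_m) be two strictly increasing sequences of distinct positive reals, and (a_n), (b_m) summable sequences of nonzero reals such that Σ_n a_n/(ζ + λ_n) = Σ_m b_m/(ζ + μ_m) for all ζ in ℂ minus the poles. Then for every n there exists m with λ_n = μ_m and a_n = b_m. -/

import Mathlib

open Complex Filter Topology

lemma residue_limit (c : ℕ → ℝ) (a : ℕ → ℝ) (ha : Summable a) :
    Tendsto (fun ε : ℝ => ∑' k, (a k : ℂ) * (ε * I) / ((c k : ℂ) + ε * I))
      (𝓝[>] (0:ℝ)) (𝓝 (∑' k, if c k = 0 then (a k : ℂ) else 0)) := by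
  apply tendsto_tsum_of_dominated_convergence (bound := fun k => |a k|)
    (ha.abs)
  · intro k
    by_cases hck : c k = 0
    · rw [if_pos hck]
      have : ∀ᶠ (ε : ℝ) in 𝓝[>] (0:ℝ),
          (a k : ℂ) * ((ε:ℂ) * I) / ((c k : ℂ) + (ε:ℂ) * I) = (a k : ℂ) := by
        filter_upwards [self_mem_nhdsWithin] with ε (hε : 0 < ε)
        rw [hck]
        have hne : (ε : ℂ) * I ≠ 0 := by
          simp [Complex.ext_iff, hε.ne']
        rw [Complex.ofReal_zero, zero_add, mul_div_assoc, div_self hne, mul_one]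
      exact Tendsto.congr' (this.mono fun ε h => h.symm) tendsto_const_nhds
    · simp only [hck, if_neg, not_false_iff]
      have h1 : Tendsto (fun ε : ℝ => (a k : ℂ) * (ε * I)) (𝓝[>] (0:ℝ)) (𝓝 0) := by
        have : Tendsto (fun ε : ℝ => (ε : ℂ)) (𝓝[>] (0:ℝ)) (𝓝 0) :=
          (Complex.continuous_ofReal.tendsto 0).mono_left nhdsWithin_le_nhds
        simpa using ((this.mul_const I).const_mul (a k : ℂ))
      have h2 : Tendsto (fun ε : ℝ => (c k : ℂ) + ε * I) (𝓝[>] (0:ℝ)) (𝓝 (c k : ℂ)) := by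
        have : Tendsto (fun ε : ℝ => (ε : ℂ)) (𝓝[>] (0:ℝ)) (𝓝 0) :=
          (Complex.continuous_ofReal.tendsto 0).mono_left nhdsWithin_le_nhds
        simpa using (tendsto_const_nhds.add (this.mul_const I))
      have hcne : (c k : ℂ) ≠ 0 := by exact_mod_cast hck
      have h3 := h1.div h2 hcne
      rw [zero_div] at h3
      exact h3
  · filter_upwards with ε
    intro k
    by_cases hz : ((c k : ℂ) + ε * I) = 0
    · simp [hz, div_zero, abs_nonneg]
    · rw [norm_div, norm_mul]
      have him : ‖(ε:ℂ) * I‖ ≤ ‖(c k : ℂ) + ε * I‖ := by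
        have : ((c k : ℂ) + ε * I).im = ε := by simp
        calc ‖(ε:ℂ) * I‖ = |ε| := by simp
        _ = |((c k : ℂ) + ε * I).im| := by rw [this]
        _ ≤ ‖(c k : ℂ) + ε * I‖ := Complex.abs_im_le_norm _
      calc ‖(a k : ℂ)‖ * ‖(ε:ℂ) * I‖ / ‖(c k : ℂ) + ε * I‖
          ≤ ‖(a k : ℂ)‖ * ‖(c k : ℂ) + ε * I‖ / ‖(c k : ℂ) + ε * I‖ := by
            gcongr
        _ = ‖(a k : ℂ)‖ := by
            rw [mul_div_assoc, div_self (by simpa using hz), mul_one]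
        _ = |a k| := by simp


open Complex

/-- Matching of poles and residues: if two series of simple fractions with
summable nonzero coefficients agree away from the poles, then every pole of
the first appears among the poles of the second with the same coefficient. -/
theorem pole_residue_matching
    (lam mu : ℕ → ℝ) (hlam : StrictMono lam) (hmu : StrictMono mu)
    (hlampos : ∀ n, 0 < lam n) (hmupos : ∀ m, 0 < mu m)
    (a b : ℕ → ℝ) (ha : Summable a) (hb : Summable b)
    (hane : ∀ n, a n ≠ 0) (hbne : ∀ m, b m ≠ 0)
    (heq : ∀ ζ : ℂ, (∀ n, ζ ≠ -(lam n : ℂ)) → (∀ m, ζ ≠ -(mu m : ℂ)) →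
      (∑' n : ℕ, (a n : ℂ) / (ζ + (lam n : ℂ)))
        = ∑' m : ℕ, (b m : ℂ) / (ζ + (mu m : ℂ))) :
    ∀ n : ℕ, ∃ m : ℕ, lam n = mu m ∧ a n = b m := by
  intro n0
  have hzeta_ne : ∀ (ε : ℝ), 0 < ε → ∀ (c : ℝ),
      (-(lam n0 : ℂ) + (ε:ℂ) * I) ≠ -(c : ℂ) := by
    intro ε hε c h
    have him := congrArg Complex.im h
    simp at him
    exact hε.ne' him
  have key : ∀ᶠ (ε : ℝ) in 𝓝[>] (0:ℝ),
      (∑' n, (a n : ℂ) * ((ε:ℂ) * I) / (((lam n - lam n0 : ℝ) : ℂ) + (ε:ℂ) * I))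
        = ∑' m, (b m : ℂ) * ((ε:ℂ) * I) / (((mu m - lam n0 : ℝ) : ℂ) + (ε:ℂ) * I) := by
    filter_upwards [self_mem_nhdsWithin] with ε (hε : 0 < ε)
    set ζ : ℂ := -(lam n0 : ℂ) + (ε:ℂ) * I with hζ
    have h := heq ζ (fun n => hzeta_ne ε hε _) (fun m => hzeta_ne ε hε _)
    have e : ∀ (x c : ℝ), ((ε:ℂ)*I) * ((x : ℂ) / (ζ + (c : ℂ)))
        = (x : ℂ) * ((ε:ℂ) * I) / (((c - lam n0 : ℝ) : ℂ) + (ε:ℂ) * I) := by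
      intro x c
      have hd : ζ + (c : ℂ) = ((c - lam n0 : ℝ) : ℂ) + (ε:ℂ) * I := by
        rw [hζ]; push_cast; ring
      rw [hd]; ring
    calc (∑' n, (a n : ℂ) * ((ε:ℂ) * I) / (((lam n - lam n0 : ℝ) : ℂ) + (ε:ℂ) * I))
        = ∑' n, ((ε:ℂ)*I) * ((a n : ℂ) / (ζ + (lam n : ℂ))) :=
          tsum_congr fun n => (e (a n) (lam n)).symm
      _ = ((ε:ℂ)*I) * ∑' n, (a n : ℂ) / (ζ + (lam n : ℂ)) := tsum_mul_left
      _ = ((ε:ℂ)*I) * ∑' m, (b m : ℂ) / (ζ + (mu m : ℂ)) := by rw [h]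
      _ = ∑' m, ((ε:ℂ)*I) * ((b m : ℂ) / (ζ + (mu m : ℂ))) := tsum_mul_left.symm
      _ = ∑' m, (b m : ℂ) * ((ε:ℂ) * I) / (((mu m - lam n0 : ℝ) : ℂ) + (ε:ℂ) * I) :=
          tsum_congr fun m => e (b m) (mu m)
  have hA := residue_limit (fun n => lam n - lam n0) a ha
  have hB := residue_limit (fun m => mu m - lam n0) b hb
  have hL : (∑' n, if lam n - lam n0 = 0 then (a n : ℂ) else 0)
      = ∑' m, if mu m - lam n0 = 0 then (b m : ℂ) else 0 :=
    tendsto_nhds_unique (Filter.Tendsto.congr' key hA) hB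
  have hLHS : (∑' n, if lam n - lam n0 = 0 then (a n : ℂ) else 0) = (a n0 : ℂ) := by
    rw [tsum_eq_single n0]
    · rw [if_pos (sub_self _)]
    · intro n hn
      rw [if_neg]
      exact sub_ne_zero.mpr fun h => hn (hlam.injective h)
  by_cases hex : ∃ m, mu m = lam n0
  · obtain ⟨m0, hm0⟩ := hex
    have hRHS : (∑' m, if mu m - lam n0 = 0 then (b m : ℂ) else 0) = (b m0 : ℂ) := by
      rw [tsum_eq_single m0]
      · rw [if_pos (by rw [hm0, sub_self])]
      · intro m hm
        rw [if_neg]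
        intro h
        exact hm (hmu.injective ((sub_eq_zero.mp h).trans hm0.symm))
    refine ⟨m0, hm0.symm, ?_⟩
    have : (a n0 : ℂ) = (b m0 : ℂ) := by rw [← hLHS, hL, hRHS]
    exact_mod_cast this
  · exfalso
    push_neg at hex
    have hRHS : (∑' m, if mu m - lam n0 = 0 then (b m : ℂ) else 0) = 0 := by
      convert tsum_zero with m
      rw [if_neg (sub_ne_zero.mpr (hex m))]
    have : (a n0 : ℂ) = 0 := by rw [← hLHS, hL, hRHS]
    exact hane n0 (by exact_mod_cast this)
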